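/- Let $(x_n)$ be defined by $x_{n+1} = (1-\alpha_{n+1})x_n + \alpha_{n+1}y_n$ with $y_{-1}=x_0$, $\alpha_0=1$, $\alpha_n\in[0,1]$, and $\pi_i^n = \alpha_i\prod_{k=i+1}^n(1-\alpha_k)$. Then for all $0 \leq m \leq n$, $x_m - x_n = \sum_{i=0}^m \sum_{j=m+1}^n \pi_i^m \pi_j^n (y_{i-1} - y_{j-1})$. -/

import Mathlib

private lemma stmt3_prod_split (α : ℕ → ℝ) {j m n : ℕ} (hjm : j ≤ m) (hmn : m ≤ n) :
    (∏ k ∈ Finset.Icc (j+1) n, (1 - α k)) =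
    (∏ k ∈ Finset.Icc (j+1) m, (1 - α k)) * ∏ k ∈ Finset.Icc (m+1) n, (1 - α k) := by
  rw [Finset.Icc_add_one_left_eq_Ioc, Finset.Icc_add_one_left_eq_Ioc, Finset.Icc_add_one_left_eq_Ioc,
    Finset.prod_Ioc_consecutive _ hjm hmn]

private lemma stmt3_sumP (α : ℕ → ℝ) (hα0 : α 0 = 1) :
    ∀ n, ∑ i ∈ Finset.range (n+1), (α i * ∏ k ∈ Finset.Icc (i+1) n, (1 - α k)) = 1 := by
  intro n
  induction n with
  | zero => simp [hα0]
  | succ n ih =>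
    rw [Finset.sum_range_succ]
    have h1 : ∀ i ∈ Finset.range (n+1),
        α i * ∏ k ∈ Finset.Icc (i+1) (n+1), (1 - α k)
        = (1 - α (n+1)) * (α i * ∏ k ∈ Finset.Icc (i+1) n, (1 - α k)) := by
      intro i hi
      rw [Finset.mem_range] at hi
      rw [Finset.prod_Icc_succ_top (by omega)]
      ring
    rw [Finset.sum_congr rfl h1, ← Finset.mul_sum, ih,
      Finset.Icc_eq_empty (by omega), Finset.prod_empty]
    ring

private lemma stmt3_xrep {X : Type*} [NormedAddCommGroup X] [NormedSpace ℝ X]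
    (α : ℕ → ℝ) (x Y : ℕ → X)
    (hα0 : α 0 = 1) (hY0 : Y 0 = x 0)
    (hrec : ∀ n, x (n+1) = (1 - α (n+1)) • x n + α (n+1) • Y (n+1)) :
    ∀ n, x n = ∑ i ∈ Finset.range (n+1),
      (α i * ∏ k ∈ Finset.Icc (i+1) n, (1 - α k)) • Y i := by
  intro n
  induction n with
  | zero => simp [hα0, hY0]
  | succ n ih =>
    rw [hrec, Finset.sum_range_succ, ih, Finset.smul_sum]
    congr 1
    · apply Finset.sum_congr rfl
      intro i hi
      rw [Finset.mem_range] at hi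
      rw [Finset.prod_Icc_succ_top (by omega), smul_smul]
      ring_nf
    · rw [Finset.Icc_eq_empty (by omega), Finset.prod_empty, mul_one]

theorem stmt3 {X : Type*} [NormedAddCommGroup X] [NormedSpace ℝ X]
    (α : ℕ → ℝ) (x Y : ℕ → X)
    (hα0 : α 0 = 1) (hα : ∀ n, α n ∈ Set.Icc (0:ℝ) 1)
    (hY0 : Y 0 = x 0)
    (hrec : ∀ n, x (n + 1) = (1 - α (n + 1)) • x n + α (n + 1) • Y (n + 1)) :
    ∀ m n, m ≤ n →
      x m - x n = ∑ i ∈ Finset.range (m + 1), ∑ j ∈ Finset.Icc (m + 1) n,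
        ((α i * ∏ k ∈ Finset.Icc (i + 1) m, (1 - α k))
          * (α j * ∏ k ∈ Finset.Icc (j + 1) n, (1 - α k))) • (Y i - Y j) := by
  intro m n hmn
  have hx := stmt3_xrep α x Y hα0 hY0 hrec
  set P : ℕ → ℕ → ℝ := fun i n => α i * ∏ k ∈ Finset.Icc (i+1) n, (1 - α k) with hP
  set c : ℝ := ∏ k ∈ Finset.Icc (m+1) n, (1 - α k) with hc
  -- split the sum for x n
  have hsplit : ∑ j ∈ Finset.range (n+1), P j n • Y j
      = ∑ j ∈ Finset.range (m+1), P j n • Y j + ∑ j ∈ Finset.Icc (m+1) n, P j n • Y j := by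
    rw [Finset.range_eq_Ico, Finset.range_eq_Ico, ← Finset.Ico_add_one_right_eq_Icc (m+1) n]
    exact (Finset.sum_Ico_consecutive _ (by omega) (by omega)).symm
  have hPjn : ∀ j ∈ Finset.range (m+1), P j n = c * P j m := by
    intro j hj
    rw [Finset.mem_range] at hj
    simp only [hP]
    rw [stmt3_prod_split α (by omega : j ≤ m) hmn]
    ring
  -- sum of P j n over the first block equals c
  have hsum1 : ∑ j ∈ Finset.range (m+1), P j n = c := by
    rw [Finset.sum_congr rfl hPjn, ← Finset.mul_sum, stmt3_sumP α hα0 m, mul_one]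
  have hsum2 : ∑ j ∈ Finset.Icc (m+1) n, P j n = 1 - c := by
    have htot : ∑ j ∈ Finset.range (n+1), P j n = 1 := stmt3_sumP α hα0 n
    have : ∑ j ∈ Finset.range (n+1), P j n
        = ∑ j ∈ Finset.range (m+1), P j n + ∑ j ∈ Finset.Icc (m+1) n, P j n := by
      rw [Finset.range_eq_Ico, Finset.range_eq_Ico, ← Finset.Ico_add_one_right_eq_Icc (m+1) n]
      exact (Finset.sum_Ico_consecutive _ (by omega) (by omega)).symm
    rw [this, hsum1] at htot
    linarith
  have hsumPm : ∑ i ∈ Finset.range (m+1), P i m = 1 := stmt3_sumP α hα0 m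
  -- rewrite the RHS
  have hrhs : ∑ i ∈ Finset.range (m + 1), ∑ j ∈ Finset.Icc (m + 1) n,
      (P i m * P j n) • (Y i - Y j)
      = (1 - c) • (∑ i ∈ Finset.range (m+1), P i m • Y i)
        - ∑ j ∈ Finset.Icc (m+1) n, P j n • Y j := by
    have : ∀ i ∈ Finset.range (m+1), ∑ j ∈ Finset.Icc (m + 1) n,
        (P i m * P j n) • (Y i - Y j)
        = (1 - c) • (P i m • Y i) - P i m • ∑ j ∈ Finset.Icc (m+1) n, P j n • Y j := by
      intro i hi
      have : ∑ j ∈ Finset.Icc (m + 1) n, (P i m * P j n) • (Y i - Y j)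
          = (∑ j ∈ Finset.Icc (m + 1) n, P j n) • (P i m • Y i)
            - P i m • ∑ j ∈ Finset.Icc (m+1) n, P j n • Y j := by
        rw [Finset.sum_smul, Finset.smul_sum, ← Finset.sum_sub_distrib]
        apply Finset.sum_congr rfl
        intro j _
        rw [smul_sub]
        module
      rw [this, hsum2]
    rw [Finset.sum_congr rfl this, Finset.sum_sub_distrib, ← Finset.smul_sum,
      ← Finset.sum_smul, hsumPm, one_smul]
  rw [hx m, hx n, hsplit]
  simp only [hP] at hrhs ⊢
  rw [hrhs]
  have : ∑ j ∈ Finset.range (m+1), P j n • Y j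
      = c • ∑ i ∈ Finset.range (m+1), P i m • Y i := by
    rw [Finset.smul_sum]
    apply Finset.sum_congr rfl
    intro j hj
    rw [hPjn j hj, smul_smul]
  simp only [hP] at this
  rw [this]
  rw [sub_smul, one_smul]
  abel
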